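/- For any integer a ≥ 1, N_2(K_{a,1,1}) = a + 1, i.e., the minimum length of a (0,1,*)-addressing of the complete tripartite graph K_{a,1,1} is a+1. -/

import Mathlib

def isAddressing {V : Type*} (G : SimpleGraph V) (N : ℕ)
    (f : V → Fin N → Option Bool) : Prop :=
  ∀ u v : V, G.dist u v =
    (Finset.univ.filter fun j : Fin N =>
      ∃ a b : Bool, f u j = some a ∧ f v j = some b ∧ a ≠ b).card

/-- The complete tripartite graph `K_{a,1,1}` on `Fin (a+2)`: vertices `0,…,a-1` form
the part of size `a`, and `a`, `a+1` are singleton parts. -/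
def K_a11 (a : ℕ) : SimpleGraph (Fin (a + 2)) where
  Adj u v := (if (u : ℕ) < a then 0 else (u : ℕ)) ≠ (if (v : ℕ) < a then 0 else (v : ℕ))
  symm := ⟨fun _ _ h => h.symm⟩
  loopless := ⟨fun _ h => h rfl⟩

/-! ### Auxiliary lemmas -/

lemma Ka11_adj_iff (a : ℕ) (u v : Fin (a+2)) : (K_a11 a).Adj u v ↔
    (if (u : ℕ) < a then 0 else (u : ℕ)) ≠ (if (v : ℕ) < a then 0 else (v : ℕ)) := Iff.rfl

lemma Ka11_dist_eq (a : ℕ) (ha : 1 ≤ a) (u v : Fin (a+2)) :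
    (K_a11 a).dist u v = if u = v then 0 else if (u : ℕ) < a ∧ (v : ℕ) < a then 2 else 1 := by
  rcases eq_or_ne u v with rfl | hne
  · simp
  rw [if_neg hne]
  by_cases hP : (u : ℕ) < a ∧ (v : ℕ) < a
  · rw [if_pos hP]
    have hna : ¬ (K_a11 a).Adj u v := by
      simp [Ka11_adj_iff, hP.1, hP.2]
    have h1 : (K_a11 a).Adj u ⟨a, by omega⟩ := by
      simp [Ka11_adj_iff, hP.1]; omega
    have h2 : (K_a11 a).Adj (⟨a, by omega⟩ : Fin (a+2)) v := by
      simp [Ka11_adj_iff, hP.2]; omega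
    have hle : (K_a11 a).dist u v ≤ 2 :=
      SimpleGraph.dist_le (SimpleGraph.Walk.cons h1 (SimpleGraph.Walk.cons h2 SimpleGraph.Walk.nil))
    have hr : (K_a11 a).Reachable u v :=
      ⟨SimpleGraph.Walk.cons h1 (SimpleGraph.Walk.cons h2 SimpleGraph.Walk.nil)⟩
    have hpos : 0 < (K_a11 a).dist u v := hr.pos_dist_of_ne hne
    have hno : (K_a11 a).dist u v ≠ 1 := fun h =>
      hna (SimpleGraph.dist_eq_one_iff_adj.mp h)
    omega
  · rw [if_neg hP]
    have hadj : (K_a11 a).Adj u v := by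
      rw [Ka11_adj_iff]
      have hv : (u:ℕ) ≠ (v:ℕ) := fun h => hne (Fin.ext h)
      rcases lt_or_ge (u:ℕ) a with h1 | h1 <;> rcases lt_or_ge (v:ℕ) a with h2 | h2 <;>
        simp [h1, h2, not_lt.mpr, -Fin.val_eq_zero_iff] <;> omega
    exact SimpleGraph.dist_eq_one_iff_adj.mpr hadj

/-! ### The explicit addressing (upper bound) -/

def addr (a : ℕ) : Fin (a+2) → Fin (a+1) → Option Bool := fun u j =>
  if (u:ℕ) < a then some (decide ((j:ℕ) = (u:ℕ)))
  else if (u:ℕ) = a then (if (j:ℕ) = a then some true else none)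
  else some false

def cnt (a : ℕ) (u v : Fin (a+2)) : ℕ :=
  (Finset.univ.filter fun j : Fin (a+1) =>
      ∃ b c : Bool, addr a u j = some b ∧ addr a v j = some c ∧ b ≠ c).card

lemma cnt_symm (a : ℕ) (u v : Fin (a+2)) : cnt a u v = cnt a v u := by
  unfold cnt
  congr 1
  apply Finset.filter_congr
  intro j _
  constructor
  · rintro ⟨b, c, h1, h2, h3⟩; exact ⟨c, b, h2, h1, h3.symm⟩
  · rintro ⟨b, c, h1, h2, h3⟩; exact ⟨c, b, h2, h1, h3.symm⟩

lemma cnt_self (a : ℕ) (u : Fin (a+2)) : cnt a u u = 0 := by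
  unfold cnt
  rw [Finset.card_eq_zero, Finset.filter_eq_empty_iff]
  rintro j _ ⟨b, c, h1, h2, h3⟩
  rw [h1] at h2
  exact h3 (Option.some_injective _ h2.symm).symm

lemma cnt_PP (a : ℕ) (u v : Fin (a+2)) (hu : (u:ℕ) < a) (hv : (v:ℕ) < a) (hne : u ≠ v) :
    cnt a u v = 2 := by
  unfold cnt
  have huv : (u:ℕ) ≠ (v:ℕ) := fun h => hne (Fin.ext h)
  have hset : (Finset.univ.filter fun j : Fin (a+1) =>
      ∃ b c : Bool, addr a u j = some b ∧ addr a v j = some c ∧ b ≠ c)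
      = {(⟨u, by omega⟩ : Fin (a+1)), ⟨v, by omega⟩} := by
    ext j
    simp only [Finset.mem_filter, Finset.mem_univ, true_and, Finset.mem_insert,
      Finset.mem_singleton, addr, if_pos hu, if_pos hv]
    constructor
    · rintro ⟨b, c, h1, h2, h3⟩
      have hb : b = decide ((j:ℕ) = (u:ℕ)) := by exact (Option.some_injective _ h1).symm
      have hc : c = decide ((j:ℕ) = (v:ℕ)) := by exact (Option.some_injective _ h2).symm
      subst hb hc
      by_cases h : (j:ℕ) = (u:ℕ)
      · left; exact Fin.ext h
      · right
        by_cases h' : (j:ℕ) = (v:ℕ)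
        · exact Fin.ext h'
        · simp [h, h'] at h3
    · rintro (rfl | rfl)
      · exact ⟨true, false, by simp, by simp [huv], by simp⟩
      · exact ⟨false, true, by simp [huv.symm], by simp, by simp⟩
  rw [hset, Finset.card_insert_of_notMem (by
    simp only [Finset.mem_singleton]
    intro h
    exact huv (by simpa [Fin.ext_iff] using h)), Finset.card_singleton]

lemma cnt_Px (a : ℕ) (u : Fin (a+2)) (hu : (u:ℕ) < a) (v : Fin (a+2))
    (hv : (v:ℕ) = a) : cnt a u v = 1 := by
  unfold cnt
  have hva : ¬ (v:ℕ) < a := by omega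
  have hset : (Finset.univ.filter fun j : Fin (a+1) =>
      ∃ b c : Bool, addr a u j = some b ∧ addr a v j = some c ∧ b ≠ c)
      = {(⟨a, by omega⟩ : Fin (a+1))} := by
    ext j
    simp only [Finset.mem_filter, Finset.mem_univ, true_and, Finset.mem_singleton,
      addr, if_pos hu, if_neg hva, if_pos hv]
    constructor
    · rintro ⟨b, c, h1, h2, h3⟩
      by_cases h : (j:ℕ) = a
      · exact Fin.ext h
      · simp [h] at h2
    · rintro rfl
      refine ⟨false, true, ?_, by simp, by simp⟩
      simp; omega
  rw [hset, Finset.card_singleton]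

lemma cnt_Py (a : ℕ) (u : Fin (a+2)) (hu : (u:ℕ) < a) (v : Fin (a+2))
    (hv : (v:ℕ) = a + 1) : cnt a u v = 1 := by
  unfold cnt
  have hva : ¬ (v:ℕ) < a := by omega
  have hva' : ¬ (v:ℕ) = a := by omega
  have hset : (Finset.univ.filter fun j : Fin (a+1) =>
      ∃ b c : Bool, addr a u j = some b ∧ addr a v j = some c ∧ b ≠ c)
      = {(⟨u, by omega⟩ : Fin (a+1))} := by
    ext j
    simp only [Finset.mem_filter, Finset.mem_univ, true_and, Finset.mem_singleton,
      addr, if_pos hu, if_neg hva, if_neg hva']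
    constructor
    · rintro ⟨b, c, h1, h2, h3⟩
      have hc : c = false := Option.some_injective _ h2.symm
      have hb : b = decide ((j:ℕ) = (u:ℕ)) := (Option.some_injective _ h1).symm
      subst hb hc
      by_cases h : (j:ℕ) = (u:ℕ)
      · exact Fin.ext h
      · simp [h] at h3
    · rintro rfl
      exact ⟨true, false, by simp, by simp, by simp⟩
  rw [hset, Finset.card_singleton]

lemma cnt_xy (a : ℕ) (u : Fin (a+2)) (hu : (u:ℕ) = a) (v : Fin (a+2))
    (hv : (v:ℕ) = a + 1) : cnt a u v = 1 := by
  unfold cnt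
  have hua : ¬ (u:ℕ) < a := by omega
  have hva : ¬ (v:ℕ) < a := by omega
  have hva' : ¬ (v:ℕ) = a := by omega
  have hset : (Finset.univ.filter fun j : Fin (a+1) =>
      ∃ b c : Bool, addr a u j = some b ∧ addr a v j = some c ∧ b ≠ c)
      = {(⟨a, by omega⟩ : Fin (a+1))} := by
    ext j
    simp only [Finset.mem_filter, Finset.mem_univ, true_and, Finset.mem_singleton,
      addr, if_neg hua, if_pos hu, if_neg hva, if_neg hva']
    constructor
    · rintro ⟨b, c, h1, h2, h3⟩
      by_cases h : (j:ℕ) = a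
      · exact Fin.ext h
      · simp [h] at h1
    · rintro rfl
      exact ⟨true, false, by simp, by simp, by simp⟩
  rw [hset, Finset.card_singleton]

lemma addr_isAddressing (a : ℕ) (ha : 1 ≤ a) :
    isAddressing (K_a11 a) (a + 1) (addr a) := by
  intro u v
  show (K_a11 a).dist u v = cnt a u v
  rcases eq_or_ne u v with rfl | hne
  · rw [cnt_self, Ka11_dist_eq a ha, if_pos rfl]
  rw [Ka11_dist_eq a ha, if_neg hne]
  have hu2 : (u:ℕ) < a + 2 := u.isLt
  have hv2 : (v:ℕ) < a + 2 := v.isLt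
  have hnuv : (u:ℕ) ≠ (v:ℕ) := fun h => hne (Fin.ext h)
  by_cases hu : (u:ℕ) < a <;> by_cases hv : (v:ℕ) < a
  · rw [if_pos ⟨hu, hv⟩, cnt_PP a u v hu hv hne]
  · rw [if_neg (by tauto)]
    rcases (by omega : (v:ℕ) = a ∨ (v:ℕ) = a + 1) with h | h
    · exact (cnt_Px a u hu v h).symm
    · exact (cnt_Py a u hu v h).symm
  · rw [if_neg (by tauto), cnt_symm]
    rcases (by omega : (u:ℕ) = a ∨ (u:ℕ) = a + 1) with h | h
    · exact (cnt_Px a v hv u h).symm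
    · exact (cnt_Py a v hv u h).symm
  · rw [if_neg (by tauto)]
    rcases (by omega : (u:ℕ) = a ∨ (u:ℕ) = a + 1) with h | h <;>
      rcases (by omega : (v:ℕ) = a ∨ (v:ℕ) = a + 1) with h' | h'
    · omega
    · exact (cnt_xy a u h v h').symm
    · rw [cnt_symm]; exact (cnt_xy a v h' u h).symm
    · omega

/-! ### Lower bound machinery -/

lemma exists_ker {m n : ℕ} (h : m < n) (M : Matrix (Fin m) (Fin n) ℝ) :
    ∃ x : Fin n → ℝ, x ≠ 0 ∧ M.mulVec x = 0 := by
  have h1 := (M.mulVecLin).finrank_range_add_finrank_ker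
  have h2 : Module.finrank ℝ (LinearMap.range M.mulVecLin) ≤ m := by
    simpa using (LinearMap.range M.mulVecLin).finrank_le
  have hd : Module.finrank ℝ (Fin n → ℝ) = n := by simp
  have hk : 0 < Module.finrank ℝ (LinearMap.ker M.mulVecLin) := by omega
  obtain ⟨⟨x, hx⟩, hne⟩ := Module.finrank_pos_iff_exists_ne_zero.mp hk
  refine ⟨x, ?_, hx⟩
  simpa [Submodule.mk_eq_zero] using hne

lemma conflict_eq (o p : Option Bool) :
    (if (∃ b c : Bool, o = some b ∧ p = some c ∧ b ≠ c) then (1:ℝ) else 0)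
    = (if o = some false then (1:ℝ) else 0) * (if p = some true then (1:ℝ) else 0)
    + (if o = some true then (1:ℝ) else 0) * (if p = some false then (1:ℝ) else 0) := by
  rcases o with _ | b
  · simp
  rcases p with _ | c
  · simp
  cases b <;> cases c <;> simp

lemma Q_eq_zero {V : Type*} [Fintype V] (G : SimpleGraph V) (N : ℕ)
    (f : V → Fin N → Option Bool) (haddr : isAddressing G N f) (x : V → ℝ)
    (hA : ∀ j : Fin N, ∑ u, (if f u j = some false then (1:ℝ) else 0) * x u = 0) :
    ∑ u, ∑ v, (G.dist u v : ℝ) * x u * x v = 0 := by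
  have h1 : ∀ u v : V, (G.dist u v : ℝ) =
      ∑ j : Fin N, ((if f u j = some false then (1:ℝ) else 0) * (if f v j = some true then (1:ℝ) else 0)
        + (if f u j = some true then (1:ℝ) else 0) * (if f v j = some false then (1:ℝ) else 0)) := by
    intro u v
    rw [haddr u v, Finset.card_filter]
    push_cast
    exact Finset.sum_congr rfl fun j _ => conflict_eq _ _
  calc ∑ u, ∑ v, (G.dist u v : ℝ) * x u * x v
      = ∑ u, ∑ v, ∑ j : Fin N,
          (((if f u j = some false then (1:ℝ) else 0) * x u) * ((if f v j = some true then (1:ℝ) else 0) * x v)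
          + ((if f u j = some true then (1:ℝ) else 0) * x u) * ((if f v j = some false then (1:ℝ) else 0) * x v)) := by
        refine Finset.sum_congr rfl fun u _ => Finset.sum_congr rfl fun v _ => ?_
        rw [h1, Finset.sum_mul, Finset.sum_mul]
        exact Finset.sum_congr rfl fun j _ => by ring
    _ = ∑ j : Fin N, ∑ u, ∑ v,
          (((if f u j = some false then (1:ℝ) else 0) * x u) * ((if f v j = some true then (1:ℝ) else 0) * x v)
          + ((if f u j = some true then (1:ℝ) else 0) * x u) * ((if f v j = some false then (1:ℝ) else 0) * x v)) := by
        rw [show (∑ u, ∑ v, ∑ j : Fin N,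
          (((if f u j = some false then (1:ℝ) else 0) * x u) * ((if f v j = some true then (1:ℝ) else 0) * x v)
          + ((if f u j = some true then (1:ℝ) else 0) * x u) * ((if f v j = some false then (1:ℝ) else 0) * x v)))
          = ∑ u, ∑ j : Fin N, ∑ v,
          (((if f u j = some false then (1:ℝ) else 0) * x u) * ((if f v j = some true then (1:ℝ) else 0) * x v)
          + ((if f u j = some true then (1:ℝ) else 0) * x u) * ((if f v j = some false then (1:ℝ) else 0) * x v))
          from Finset.sum_congr rfl fun u _ => Finset.sum_comm]
        exact Finset.sum_comm
    _ = ∑ j : Fin N,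
          ((∑ u, (if f u j = some false then (1:ℝ) else 0) * x u) * (∑ v, (if f v j = some true then (1:ℝ) else 0) * x v)
          + (∑ u, (if f u j = some true then (1:ℝ) else 0) * x u) * (∑ v, (if f v j = some false then (1:ℝ) else 0) * x v)) := by
        refine Finset.sum_congr rfl fun j _ => ?_
        rw [Finset.sum_mul_sum, Finset.sum_mul_sum, ← Finset.sum_add_distrib]
        exact Finset.sum_congr rfl fun u _ => Finset.sum_add_distrib
    _ = 0 := by
        refine Finset.sum_eq_zero fun j _ => ?_
        rw [hA j]
        ring

lemma sum_expand (n : ℕ) (x p : Fin n → ℝ) :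
    ∑ u, ∑ v, ((1:ℝ) - (if u = v then 1 else 0) + p u * p v - (if u = v then 1 else 0) * p u) * x u * x v
    = (∑ u, x u)^2 - ∑ u, (x u)^2 + (∑ u, p u * x u)^2 - ∑ u, p u * (x u)^2 := by
  have step1 : ∀ u : Fin n,
      ∑ v, ((1:ℝ) - (if u = v then 1 else 0) + p u * p v - (if u = v then 1 else 0) * p u) * x u * x v
      = x u * (∑ v, x v) - x u * x u + (p u * x u) * (∑ v, p v * x v) - p u * (x u * x u) := by
    intro u
    have : ∀ v : Fin n,
        ((1:ℝ) - (if u = v then 1 else 0) + p u * p v - (if u = v then 1 else 0) * p u) * x u * x v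
        = (x u * x v + (p u * x u) * (p v * x v)) - (if u = v then x u * x v + p u * (x u * x v) else 0) := by
      intro v
      by_cases h : u = v <;> simp [h] <;> ring
    rw [Finset.sum_congr rfl fun v _ => this v, Finset.sum_sub_distrib, Finset.sum_add_distrib,
      Finset.sum_ite_eq, ← Finset.mul_sum, ← Finset.mul_sum]
    simp only [Finset.mem_univ, if_true]
    ring_nf
  rw [Finset.sum_congr rfl fun u _ => step1 u, Finset.sum_sub_distrib, Finset.sum_add_distrib,
    Finset.sum_sub_distrib, ← Finset.sum_mul, ← Finset.sum_mul]
  ring_nf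

lemma distR (a : ℕ) (ha : 1 ≤ a) (u v : Fin (a+2)) :
    ((K_a11 a).dist u v : ℝ) =
      (1:ℝ) - (if u = v then 1 else 0)
      + (if (u:ℕ) < a then (1:ℝ) else 0) * (if (v:ℕ) < a then (1:ℝ) else 0)
      - (if u = v then 1 else 0) * (if (u:ℕ) < a then (1:ℝ) else 0) := by
  rw [Ka11_dist_eq a ha]
  rcases eq_or_ne u v with rfl | hne
  · by_cases h : (u:ℕ) < a <;> simp [h]
  · by_cases h2 : (u:ℕ) < a <;> by_cases h3 : (v:ℕ) < a <;>
      simp [hne, h2, h3] <;> norm_num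

/-! ### Main theorem -/

/-- `N₂(K_{a,1,1}) = a + 1`. -/
theorem N2_K_a11 (a : ℕ) (ha : 1 ≤ a) :
    (∃ f : Fin (a + 2) → Fin (a + 1) → Option Bool, isAddressing (K_a11 a) (a + 1) f) ∧
    (∀ (N : ℕ) (f : Fin (a + 2) → Fin N → Option Bool),
      isAddressing (K_a11 a) N f → a + 1 ≤ N) := by
  constructor
  · exact ⟨addr a, addr_isAddressing a ha⟩
  intro N f haddr
  by_contra hN
  push_neg at hN
  -- hN : N < a + 1
  set M : Matrix (Fin (N+1)) (Fin (a+2)) ℝ := fun i u =>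
    if h' : (i:ℕ) < N then (if f u ⟨i, h'⟩ = some false then 1 else 0)
    else (if (u:ℕ) < a then 2 else 1) with hM
  obtain ⟨x, hx0, hker⟩ := exists_ker (show N + 1 < a + 2 by omega) M
  have hrow : ∀ i : Fin (N+1), ∑ u : Fin (a+2), M i u * x u = 0 := by
    intro i
    have := congrFun hker i
    simpa [Matrix.mulVec, dotProduct] using this
  have hA : ∀ j : Fin N, ∑ u : Fin (a+2), (if f u j = some false then (1:ℝ) else 0) * x u = 0 := by
    intro j
    have h := hrow ⟨(j:ℕ), by omega⟩
    have hMj : ∀ u : Fin (a+2), M ⟨(j:ℕ), by omega⟩ u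
        = (if f u j = some false then (1:ℝ) else 0) := by
      intro u
      have hj : (j:ℕ) < N := j.isLt
      simp [hM, hj, Fin.eta]
    rw [Finset.sum_congr rfl fun u _ => by rw [hMj u]] at h
    exact h
  have hL : ∑ u : Fin (a+2), (if (u:ℕ) < a then (2:ℝ) else 1) * x u = 0 := by
    have h := hrow ⟨N, by omega⟩
    have hMN : ∀ u : Fin (a+2), M ⟨N, by omega⟩ u = (if (u:ℕ) < a then (2:ℝ) else 1) := by
      intro u
      simp [hM]
    rw [Finset.sum_congr rfl fun u _ => by rw [hMN u]] at h
    exact h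
  -- Q = 0 from the addressing
  have hQ0 : ∑ u, ∑ v, ((K_a11 a).dist u v : ℝ) * x u * x v = 0 :=
    Q_eq_zero (K_a11 a) N f haddr x hA
  -- Q closed form
  have hQ : ∑ u, ∑ v, ((K_a11 a).dist u v : ℝ) * x u * x v
      = (∑ u : Fin (a+2), x u)^2 - (∑ u : Fin (a+2), (x u)^2)
        + (∑ u : Fin (a+2), (if (u:ℕ) < a then (1:ℝ) else 0) * x u)^2
        - ∑ u : Fin (a+2), (if (u:ℕ) < a then (1:ℝ) else 0) * (x u)^2 := by
    refine Eq.trans (Finset.sum_congr rfl fun u _ => Finset.sum_congr rfl fun v _ => ?_)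
      (sum_expand (a+2) x (fun u => if (u:ℕ) < a then (1:ℝ) else 0))
    rw [distR a ha u v]
  -- notation
  set P : Finset (Fin (a+2)) := Finset.univ.filter (fun u => (u:ℕ) < a) with hP
  have hsum1 : ∑ u : Fin (a+2), (if (u:ℕ) < a then (1:ℝ) else 0) * x u = ∑ u ∈ P, x u := by
    rw [hP, Finset.sum_filter]
    exact Finset.sum_congr rfl fun u _ => by by_cases h : (u:ℕ) < a <;> simp [h]
  have hsum2 : ∑ u : Fin (a+2), (if (u:ℕ) < a then (1:ℝ) else 0) * (x u)^2 = ∑ u ∈ P, (x u)^2 := by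
    rw [hP, Finset.sum_filter]
    exact Finset.sum_congr rfl fun u _ => by by_cases h : (u:ℕ) < a <;> simp [h]
  have hsplit1 : ∑ u : Fin (a+2), x u = (∑ u ∈ P, x u) + ∑ u ∈ Pᶜ, x u := by
    rw [hP, Finset.compl_filter]
    exact (Finset.sum_filter_add_sum_filter_not _ _ _).symm
  have hsplit2 : ∑ u : Fin (a+2), (x u)^2 = (∑ u ∈ P, (x u)^2) + ∑ u ∈ Pᶜ, (x u)^2 := by
    rw [hP, Finset.compl_filter]
    exact (Finset.sum_filter_add_sum_filter_not _ _ _).symm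
  have hLsplit : (∑ u : Fin (a+2), x u) + ∑ u ∈ P, x u = 0 := by
    have key : (∑ u : Fin (a+2), x u) + ∑ u : Fin (a+2), (if (u:ℕ) < a then (1:ℝ) else 0) * x u
        = ∑ u : Fin (a+2), (if (u:ℕ) < a then (2:ℝ) else 1) * x u := by
      rw [← Finset.sum_add_distrib]
      refine Finset.sum_congr rfl fun u _ => ?_
      by_cases h : (u:ℕ) < a
      · rw [if_pos h, if_pos h]; ring
      · rw [if_neg h, if_neg h]; ring
    rw [← hsum1, key, hL]
  -- |Pᶜ| = 2
  have hcardPc : Pᶜ.card = 2 := by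
    have : Pᶜ = {(⟨a, by omega⟩ : Fin (a+2)), ⟨a+1, by omega⟩} := by
      ext u
      simp only [Finset.mem_compl, hP, Finset.mem_filter, Finset.mem_univ, true_and,
        Finset.mem_insert, Finset.mem_singleton, not_lt, Fin.ext_iff]
      have := u.isLt
      omega
    rw [this, Finset.card_insert_of_notMem (by simp [Fin.ext_iff]), Finset.card_singleton]
  -- Cauchy-Schwarz on Pᶜ
  have hCS : (∑ u ∈ Pᶜ, x u)^2 ≤ 2 * ∑ u ∈ Pᶜ, (x u)^2 := by
    have := sq_sum_le_card_mul_sum_sq (s := Pᶜ) (f := x)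
    rwa [hcardPc] at this
    
  set S := ∑ u ∈ P, x u
  set Sp2 := ∑ u ∈ P, (x u)^2
  set Sc := ∑ u ∈ Pᶜ, x u
  set Sc2 := ∑ u ∈ Pᶜ, (x u)^2
  have hSc : Sc = -2 * S := by
    have := hLsplit
    rw [hsplit1] at this
    linarith
  have hmain : 2*S^2 - 2*Sp2 - Sc2 = 0 := by
    have := hQ0
    rw [hQ, hsum1, hsum2, hsplit1, hsplit2] at this
    have h4 : (S + Sc)^2 = S^2 := by rw [hSc]; ring
    nlinarith [this, h4]
  have hSp2nn : 0 ≤ Sp2 := Finset.sum_nonneg fun u _ => sq_nonneg _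
  have hSc2nn : 0 ≤ Sc2 := Finset.sum_nonneg fun u _ => sq_nonneg _
  have hSc2' : Sc^2 = 4*S^2 := by rw [hSc]; ring
  have hSp2le : Sp2 ≤ 0 := by linarith [hCS, hmain, hSc2']
  have hSp2 : Sp2 = 0 := le_antisymm hSp2le hSp2nn
  have hxP : ∀ u ∈ P, x u = 0 := by
    intro u hu
    have := (Finset.sum_eq_zero_iff_of_nonneg fun u _ => sq_nonneg (x u)).mp hSp2 u hu
    exact pow_eq_zero_iff (by norm_num) |>.mp this
  have hS : S = 0 := Finset.sum_eq_zero hxP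
  have hSc2 : Sc2 = 0 := by rw [hS, hSp2] at hmain; linarith
  have hxPc : ∀ u ∈ Pᶜ, x u = 0 := by
    intro u hu
    have := (Finset.sum_eq_zero_iff_of_nonneg fun u _ => sq_nonneg (x u)).mp hSc2 u hu
    exact pow_eq_zero_iff (by norm_num) |>.mp this
  apply hx0
  funext u
  by_cases h : u ∈ P
  · exact hxP u h
  · exact hxPc u (Finset.mem_compl.mpr h)
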